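/- arXiv:1408.3024 — 2 statements merged into one kernel-verified Lean document; each statement's English description precedes it below -/
import Mathlib

section
/- Any surjective group homomorphism from a finite direct product G_1 × ... × G_{n+1} of nonabelian finite simple groups onto a finite simple group S that kills some element g with nontrivial last coordinate must be trivial on the last factor, i.e., it factors through the projection onto the first n factors. -/
theorem epi_killing_last_coordinate_is_trivial_on_last_factor
    (n : ℕ) (G : Fin (n + 1) → Type) [∀ i, Group (G i)] [∀ i, Finite (G i)]
    [∀ i, IsSimpleGroup (G i)]
    (hnonab : ∀ i, ∃ a b : G i, a * b ≠ b * a)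
    (S : Type) [Group S] [Finite S] [IsSimpleGroup S]
    (β : (∀ i, G i) →* S) (hβ : Function.Surjective β)
    (g : ∀ i, G i) (hg : β g = 1) (hglast : g (Fin.last n) ≠ 1) :
    (∀ h : G (Fin.last n), β (Pi.mulSingle (Fin.last n) h) = 1) ∧
      ∃ β' : (∀ i : Fin n, G i.castSucc) →* S,
        ∀ x : ∀ i, G i, β x = β' (fun i => x i.castSucc) := by
  set φ : G (Fin.last n) →* S := β.comp (MonoidHom.mulSingle G (Fin.last n)) with hφ
  -- extension homomorphism
  have ext_mul : ∀ (y z : ∀ i : Fin n, G i.castSucc),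
      (fun i => Fin.lastCases (motive := G) (1 : G (Fin.last n)) (fun j => y j * z j) i)
      = (fun i => Fin.lastCases (motive := G) (1 : G (Fin.last n)) y i)
        * (fun i => Fin.lastCases (motive := G) (1 : G (Fin.last n)) z i) := by
    intro y z
    funext i
    induction i using Fin.lastCases with
    | last => simp
    | cast j => simp
  set E : (∀ i : Fin n, G i.castSucc) →* (∀ i, G i) :=
    { toFun := fun y i => Fin.lastCases (motive := G) (1 : G (Fin.last n)) y i
      map_one' := by funext i; induction i using Fin.lastCases <;> simp
      map_mul' := fun y z => ext_mul y z } with hE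
  -- decomposition of any element
  have hdecomp : ∀ x : ∀ i, G i,
      x = E (fun i => x i.castSucc) * Pi.mulSingle (Fin.last n) (x (Fin.last n)) := by
    intro x
    funext i
    induction i using Fin.lastCases with
    | last => simp [hE]
    | cast j =>
        have hne : (j.castSucc : Fin (n + 1)) ≠ Fin.last n := Fin.castSucc_lt_last j |>.ne
        simp [hE, Pi.mulSingle, Function.update, hne]
  -- conjugation formula
  have hconj : ∀ (x : ∀ i, G i) (h : G (Fin.last n)),
      x * Pi.mulSingle (Fin.last n) h * x⁻¹
        = Pi.mulSingle (Fin.last n) (x (Fin.last n) * h * (x (Fin.last n))⁻¹) := by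
    intro x h
    funext i
    by_cases hi : i = Fin.last n
    · subst hi; simp
    · simp [Pi.mulSingle, Function.update, hi]
  -- φ.range is normal
  have hN : (φ.range).Normal := by
    constructor
    intro s hs t
    obtain ⟨h, rfl⟩ := hs
    obtain ⟨x, rfl⟩ := hβ t
    refine ⟨x (Fin.last n) * h * (x (Fin.last n))⁻¹, ?_⟩
    simp only [hφ, MonoidHom.comp_apply, MonoidHom.mulSingle_apply]
    rw [← hconj x h]
    simp [mul_assoc]
  have hS : Nontrivial S := IsSimpleGroup.toNontrivial
  rcases IsSimpleGroup.eq_bot_or_eq_top_of_normal φ.range hN with hbot | htop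
  · -- φ trivial: conclude
    have hφ1 : ∀ h : G (Fin.last n), β (Pi.mulSingle (Fin.last n) h) = 1 := by
      intro h
      have : φ h ∈ φ.range := ⟨h, rfl⟩
      rw [hbot] at this
      simpa [hφ] using this
    refine ⟨hφ1, ⟨β.comp E, ?_⟩⟩
    intro x
    rw [MonoidHom.comp_apply]
    conv_lhs => rw [hdecomp x]
    rw [map_mul, hφ1, mul_one]
  · -- φ.range = ⊤ : derive contradiction
    exfalso
    -- images of the complement commute with everything
    have hcomm : ∀ y : ∀ i : Fin n, G i.castSucc, β (E y) ∈ Subgroup.center S := by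
      intro y
      rw [Subgroup.mem_center_iff]
      intro s
      have hs : s ∈ φ.range := htop ▸ Subgroup.mem_top s
      obtain ⟨h, rfl⟩ := hs
      have hcm : Pi.mulSingle (Fin.last n) h * E y = E y * Pi.mulSingle (Fin.last n) h := by
        funext i
        induction i using Fin.lastCases with
        | last => simp [hE]
        | cast j =>
            have hne : (j.castSucc : Fin (n + 1)) ≠ Fin.last n := Fin.castSucc_lt_last j |>.ne
            simp [hE, Pi.mulSingle, Function.update, hne]
    -- φ is injective or trivial
      simp only [hφ, MonoidHom.comp_apply, MonoidHom.mulSingle_apply]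
      rw [← map_mul, ← map_mul, hcm]
    have hkerφ := IsSimpleGroup.eq_bot_or_eq_top_of_normal φ.ker (MonoidHom.normal_ker φ)
    have hker_bot : φ.ker = ⊥ := by
      rcases hkerφ with h | h
      · exact h
      · exfalso
        have : φ.range = ⊥ := by
          rw [Subgroup.eq_bot_iff_forall]
          rintro s ⟨h', rfl⟩
          have : h' ∈ φ.ker := h ▸ Subgroup.mem_top h'
          simpa using this
        rw [htop] at this
        obtain ⟨s, hs⟩ := exists_ne (1 : S)
        exact hs ((Subgroup.eq_bot_iff_forall _).mp this s (this ▸ Subgroup.mem_top s))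
    -- center is trivial
    have hcenter : Subgroup.center S = ⊥ := by
      rcases IsSimpleGroup.eq_bot_or_eq_top_of_normal (Subgroup.center S)
          (inferInstance : (Subgroup.center S).Normal) with h | h
      · exact h
      · exfalso
        obtain ⟨a, b, hab⟩ := hnonab (Fin.last n)
        have : φ a * φ b = φ b * φ a := by
          have ha : φ a ∈ Subgroup.center S := h ▸ Subgroup.mem_top _
          rw [Subgroup.mem_center_iff] at ha
          exact (ha (φ b)).symm
        have : φ (a * b) = φ (b * a) := by rw [map_mul, map_mul, this]
        have : a * b = b * a := by
          have hinj : Function.Injective φ := (MonoidHom.ker_eq_bot_iff φ).mp hker_bot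
          exact hinj this
        exact hab this
    -- now β (E y) = 1
    have hE1 : ∀ y, β (E y) = 1 := by
      intro y
      have := hcomm y
      rw [hcenter, Subgroup.mem_bot] at this
      exact this
    have : φ (g (Fin.last n)) = 1 := by
      have := hg
      rw [hdecomp g, map_mul, hE1, one_mul] at this
      simpa [hφ] using this
    have : g (Fin.last n) ∈ φ.ker := this
    rw [hker_bot, Subgroup.mem_bot] at this
    exact hglast this
end

section
/- Let ρ_1, ρ_2 : Δ → SL(2,R) be two homomorphisms such that no element of ρ_1(Δ) or ρ_2(Δ) other than ±1 has trace 0, and such that ε : Δ → {±1} defined by tr ρ_1(γ) = ε(γ) tr ρ_2(γ) is well-defined (all traces nonzero). If ε(γ) = ε(δ) = 1, then ε(γδ) = 1 and ε(γδ^{-1}) = 1. -/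
open Matrix

lemma trace_mul_add_trace_mul_inv_sl2 (A B : Matrix.SpecialLinearGroup (Fin 2) ℝ) :
    Matrix.trace ((A*B : Matrix.SpecialLinearGroup (Fin 2) ℝ) : Matrix (Fin 2) (Fin 2) ℝ)
      + Matrix.trace ((A*B⁻¹ : Matrix.SpecialLinearGroup (Fin 2) ℝ) : Matrix (Fin 2) (Fin 2) ℝ)
    = Matrix.trace (A : Matrix (Fin 2) (Fin 2) ℝ) * Matrix.trace (B : Matrix (Fin 2) (Fin 2) ℝ) := by
  simp only [Matrix.SpecialLinearGroup.coe_mul, Matrix.SpecialLinearGroup.coe_inv]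
  simp [Matrix.trace_fin_two, Matrix.mul_apply, Fin.sum_univ_two, Matrix.adjugate_fin_two]
  ring

theorem epsilon_multiplicative_step
    (Δ : Type) [Group Δ]
    (ρ₁ ρ₂ : Δ →* Matrix.SpecialLinearGroup (Fin 2) ℝ)
    (htr₁ : ∀ γ : Δ, Matrix.trace ((ρ₁ γ : Matrix (Fin 2) (Fin 2) ℝ)) ≠ 0)
    (htr₂ : ∀ γ : Δ, Matrix.trace ((ρ₂ γ : Matrix (Fin 2) (Fin 2) ℝ)) ≠ 0)
    (ε : Δ → ℝ)
    (hval : ∀ γ : Δ, ε γ = 1 ∨ ε γ = -1)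
    (hε : ∀ γ : Δ, Matrix.trace ((ρ₁ γ : Matrix (Fin 2) (Fin 2) ℝ)) =
        ε γ * Matrix.trace ((ρ₂ γ : Matrix (Fin 2) (Fin 2) ℝ)))
    (γ δ : Δ) (hγ : ε γ = 1) (hδ : ε δ = 1) :
    ε (γ * δ) = 1 ∧ ε (γ * δ⁻¹) = 1 := by
  have h1 := trace_mul_add_trace_mul_inv_sl2 (ρ₁ γ) (ρ₁ δ)
  have h2 := trace_mul_add_trace_mul_inv_sl2 (ρ₂ γ) (ρ₂ δ)
  rw [← _root_.map_mul, ← map_inv, ← _root_.map_mul] at h1 h2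
  have e1 := hε (γ * δ)
  have e2 := hε (γ * δ⁻¹)
  have eγ := hε γ; rw [hγ, one_mul] at eγ
  have eδ := hε δ; rw [hδ, one_mul] at eδ
  have key : ε (γ * δ) * Matrix.trace ((ρ₂ (γ * δ) : Matrix (Fin 2) (Fin 2) ℝ))
      + ε (γ * δ⁻¹) * Matrix.trace ((ρ₂ (γ * δ⁻¹) : Matrix (Fin 2) (Fin 2) ℝ))
      = Matrix.trace ((ρ₂ (γ * δ) : Matrix (Fin 2) (Fin 2) ℝ))
      + Matrix.trace ((ρ₂ (γ * δ⁻¹) : Matrix (Fin 2) (Fin 2) ℝ)) := by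
    rw [← e1, ← e2, h1, eγ, eδ, h2]
  rcases hval (γ * δ) with ha | ha <;> rcases hval (γ * δ⁻¹) with hb | hb
  · exact ⟨ha, hb⟩
  · rw [ha, hb] at key
    exact absurd (by linarith) (htr₂ (γ * δ⁻¹))
  · rw [ha, hb] at key
    exact absurd (by linarith) (htr₂ (γ * δ))
  · rw [ha, hb] at key
    have : Matrix.trace ((ρ₂ (γ * δ) : Matrix (Fin 2) (Fin 2) ℝ))
        + Matrix.trace ((ρ₂ (γ * δ⁻¹) : Matrix (Fin 2) (Fin 2) ℝ)) = 0 := by linarith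
    rw [h2, ← eγ, ← eδ] at this
    exact absurd this (mul_ne_zero (htr₁ γ) (htr₁ δ))
end
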